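/- Let N ≥ 1 and let x : ℤ/Nℤ → ℚ satisfy: (a) x(0) = 0; (b) x(−a) = x(a) for all a ∈ ℤ/Nℤ; (c) for every factorization N = d·N' with d ≥ 1 and every integer a' with 1 ≤ a' ≤ N'−1, x(d·a' mod N) = Σ_{k=0}^{d−1} x(a' + k·N' mod N). For each divisor d of N, with N' = N/d, set ρ(d) = Σ_{k=0}^{d−1} x(k·N' mod N). Then for all positive integers d₁, d₂ such that d₁·d₂ divides N, one has ρ(d₁·d₂) = ρ(d₁) + ρ(d₂). -/
import Mathlib

/-- Splitting a sum over `range (m * n)` into a double sum. -/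
lemma sum_range_mul_split (m n : ℕ) (f : ℕ → ℚ) :
    ∑ i ∈ Finset.range (m * n), f i
      = ∑ j ∈ Finset.range n, ∑ k ∈ Finset.range m, f (j + k * n) := by
  induction m with
  | zero => simp
  | succ m ih =>
    have h : (m + 1) * n = m * n + n := by ring
    rw [h, Finset.sum_range_add, ih, ← Finset.sum_add_distrib]
    refine Finset.sum_congr rfl fun j hj => ?_
    rw [Finset.sum_range_succ]
    congr 2
    ring

/-- Distribution relations in degree 1: if `x : ℤ/Nℤ → ℚ` satisfies `x(0) = 0`,
`x(−a) = x(a)`, and the distribution relations, then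
`ρ(d) = Σ_{k=0}^{d−1} x(k·(N/d))` is additive: `ρ(d₁d₂) = ρ(d₁) + ρ(d₂)` whenever
`d₁·d₂ ∣ N`. -/
theorem statement_18 (N : ℕ) (hN : 1 ≤ N) (x : ZMod N → ℚ)
    (ha : x 0 = 0) (hb : ∀ a : ZMod N, x (-a) = x a)
    (hc : ∀ d N' : ℕ, 1 ≤ d → N = d * N' → ∀ a' : ℕ, 1 ≤ a' → a' ≤ N' - 1 →
      x ((d * a' : ℕ) : ZMod N) =
        ∑ k ∈ Finset.range d, x ((a' + k * N' : ℕ) : ZMod N)) :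
    ∀ d₁ d₂ : ℕ, 0 < d₁ → 0 < d₂ → d₁ * d₂ ∣ N →
      (∑ k ∈ Finset.range (d₁ * d₂), x ((k * (N / (d₁ * d₂)) : ℕ) : ZMod N)) =
        (∑ k ∈ Finset.range d₁, x ((k * (N / d₁) : ℕ) : ZMod N)) +
        (∑ k ∈ Finset.range d₂, x ((k * (N / d₂) : ℕ) : ZMod N)) := by
  intro d₁ d₂ h1 h2 hd
  set M := N / (d₁ * d₂) with hMdef
  have hN' : N = d₁ * d₂ * M := (Nat.mul_div_cancel' hd).symm
  have hMpos : 0 < M := Nat.div_pos (Nat.le_of_dvd (by omega) hd) (Nat.mul_pos h1 h2)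
  have hq1 : N / d₁ = d₂ * M := by
    rw [hN', mul_assoc, Nat.mul_div_cancel_left _ h1]
  have hq2 : N / d₂ = d₁ * M := by
    have : N = d₂ * (d₁ * M) := by rw [hN']; ring
    rw [this, Nat.mul_div_cancel_left _ h2]
  -- key distribution relation instance
  have key : ∀ j : ℕ, 1 ≤ j → j ≤ d₂ - 1 →
      ∑ k ∈ Finset.range d₁, x ((j * M + k * (d₂ * M) : ℕ) : ZMod N)
        = x ((d₁ * (j * M) : ℕ) : ZMod N) := by
    intro j hj1 hj2
    refine (hc d₁ (d₂ * M) h1 (by rw [hN']; ring) (j * M)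
      (Nat.one_le_iff_ne_zero.mpr (by positivity)) ?_).symm
    have h3 : j * M ≤ (d₂ - 1) * M := Nat.mul_le_mul_right _ hj2
    have h4 : (d₂ - 1) * M = d₂ * M - M := by
      rw [Nat.sub_mul, one_mul]
    have h5 : M ≤ d₂ * M := Nat.le_mul_of_pos_left _ h2
    omega
  rw [hq1, hq2, sum_range_mul_split d₁ d₂ (fun i => x ((i * M : ℕ) : ZMod N))]
  obtain ⟨e, he⟩ : ∃ e, d₂ = e + 1 := ⟨d₂ - 1, by omega⟩
  subst he
  rw [Finset.sum_range_succ',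
    Finset.sum_range_succ' (fun j => x ((j * (d₁ * M) : ℕ) : ZMod N))]
  have hmain : ∀ j ∈ Finset.range e,
      (∑ k ∈ Finset.range d₁, x ((((j + 1) + k * (e + 1)) * M : ℕ) : ZMod N))
        = x (((j + 1) * (d₁ * M) : ℕ) : ZMod N) := by
    intro j hj
    simp only [Finset.mem_range] at hj
    have hk := key (j + 1) (by omega) (by omega)
    calc (∑ k ∈ Finset.range d₁, x ((((j + 1) + k * (e + 1)) * M : ℕ) : ZMod N))
        = ∑ k ∈ Finset.range d₁, x (((j + 1) * M + k * ((e + 1) * M) : ℕ) : ZMod N) := by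
          refine Finset.sum_congr rfl fun k _ => ?_
          congr 2
          ring
      _ = x ((d₁ * ((j + 1) * M) : ℕ) : ZMod N) := hk
      _ = x (((j + 1) * (d₁ * M) : ℕ) : ZMod N) := by congr 2; ring
  rw [Finset.sum_congr rfl hmain]
  have hz : x (((0 * (d₁ * M) : ℕ) : ZMod N)) = 0 := by
    norm_num [ha]
  rw [hz, add_zero]
  rw [add_comm]
  congr 1
  refine Finset.sum_congr rfl fun k _ => ?_
  congr 2
  ring
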